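/- Let a > 0 and let f_a(θ) = (2 - 2cos(2√a θ))/(4a) and g_a(θ) = (1 + cos(2√a θ))/2. For any ε with 0 < ε < π/√a, the sequence r_n = ∫_{-ε}^{ε} f_a(θ) g_a(θ)^n dθ satisfies r_n · n^{3/2} → √π/(2 a^{3/2}) as n → ∞. -/

import Mathlib

open Real Filter intervalIntegral Topology

private lemma prodP (n : ℕ) :
    ∏ i ∈ Finset.range n, (2 * (i:ℝ) + 1) / (2 * i + 2)
      = (Nat.factorial (2*n) : ℝ) / ((Nat.factorial n : ℝ)^2 * 4^n) := by
  induction n with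
  | zero => simp
  | succ k ih =>
    rw [Finset.prod_range_succ, ih]
    have h1 : (Nat.factorial k : ℝ) ≠ 0 := Nat.cast_ne_zero.mpr k.factorial_ne_zero
    have h2 : (2*(k+1)) = (2*k) + 1 + 1 := by ring
    rw [h2, Nat.factorial_succ, Nat.factorial_succ, Nat.factorial_succ]
    push_cast
    field_simp
    ring

private lemma P_sqrt_eq (n : ℕ) (hn : 1 ≤ n) :
    (Nat.factorial (2*n) : ℝ) / ((Nat.factorial n : ℝ)^2 * 4^n) * Real.sqrt n
      = Stirling.stirlingSeq (2*n) / (Stirling.stirlingSeq n)^2 := by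
  have hn0 : (0:ℝ) < n := by exact_mod_cast hn
  have hsn : (0:ℝ) < Real.sqrt n := Real.sqrt_pos.mpr hn0
  have hA : ((n:ℝ)/Real.exp 1)^n ≠ 0 := by positivity
  have hf : (Nat.factorial n : ℝ) ≠ 0 := Nat.cast_ne_zero.mpr n.factorial_ne_zero
  have hsq : Real.sqrt (2 * (n:ℝ)) ^ 2 = 2 * n := Real.sq_sqrt (by positivity)
  have h4 : Real.sqrt (2 * ((2*n : ℕ):ℝ)) = 2 * Real.sqrt n := by
    push_cast
    rw [show (2:ℝ) * (2 * n) = 2^2 * n by ring, Real.sqrt_mul (by positivity),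
      Real.sqrt_sq (by norm_num)]
  have hpow : (((2*n : ℕ):ℝ)/Real.exp 1)^(2*n)
      = 4^n * (((n:ℝ)/Real.exp 1)^n * ((n:ℝ)/Real.exp 1)^n) := by
    push_cast
    rw [show (2:ℝ) * n / Real.exp 1 = 2 * ((n:ℝ)/Real.exp 1) by ring, mul_pow,
      show (2:ℝ)^(2*n) = 4^n by rw [pow_mul]; norm_num, two_mul, pow_add]
  rw [Stirling.stirlingSeq, Stirling.stirlingSeq, h4, hpow]
  generalize hB : ((n:ℝ)/Real.exp 1)^n = B at *
  have hB0 : B ≠ 0 := hA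
  rw [div_pow, mul_pow, hsq]
  set s := Real.sqrt (n:ℝ) with hsdef
  have hs2 : (n:ℝ) = s^2 := (Real.sq_sqrt hn0.le).symm
  rw [hs2]
  field_simp

private lemma tendsto_P_sqrt :
    Tendsto (fun n : ℕ => (∏ i ∈ Finset.range n, (2 * (i:ℝ) + 1) / (2 * i + 2)) * Real.sqrt n)
      atTop (𝓝 (Real.sqrt π / π)) := by
  have hπ : Real.sqrt π ≠ 0 := by positivity
  have h1 : Tendsto (fun n : ℕ => Stirling.stirlingSeq (2*n) / (Stirling.stirlingSeq n)^2)
      atTop (𝓝 (Real.sqrt π / (Real.sqrt π)^2)) :=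
    (Stirling.tendsto_stirlingSeq_sqrt_pi.comp
      (tendsto_id.const_mul_atTop' two_pos)).div
      (Stirling.tendsto_stirlingSeq_sqrt_pi.pow 2) (pow_ne_zero 2 hπ)
  rw [Real.sq_sqrt Real.pi_pos.le] at h1
  apply h1.congr'
  filter_upwards [eventually_ge_atTop 1] with n hn
  rw [← P_sqrt_eq n hn, prodP]

private lemma integral_cos_pow_full (m : ℕ) :
    (∫ u in (-(π/2))..(π/2), Real.cos u ^ (2*m))
      = π * ∏ i ∈ Finset.range m, (2 * (i:ℝ) + 1) / (2 * i + 2) := by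
  rw [← integral_sin_pow_even]
  have h : ∀ x ∈ Set.uIcc (-(π/2)) (π/2),
      Real.cos x ^ (2*m) = (fun y => Real.sin y ^ (2*m)) (x + π/2) := by
    intro x _
    simp [Real.sin_add_pi_div_two]
  rw [intervalIntegral.integral_congr h,
    intervalIntegral.integral_comp_add_right (fun y => Real.sin y ^ (2*m)) (π/2)]
  norm_num

private lemma integral_main (m : ℕ) :
    (∫ u in (-(π/2))..(π/2), Real.sin u ^2 * Real.cos u ^ (2*m))
      = π * (∏ i ∈ Finset.range m, (2 * (i:ℝ) + 1) / (2 * i + 2)) / (2*m+2) := by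
  have key : ∀ u ∈ Set.uIcc (-(π/2)) (π/2), Real.sin u ^2 * Real.cos u ^(2*m)
      = Real.cos u ^(2*m) - Real.cos u ^(2*(m+1)) := by
    intro u _
    have h := Real.sin_sq_add_cos_sq u
    have hs : Real.sin u ^2 = 1 - Real.cos u ^2 := by linarith
    rw [hs]; ring
  rw [intervalIntegral.integral_congr key,
    intervalIntegral.integral_sub ((Continuous.intervalIntegrable (by fun_prop) _ _))
      ((Continuous.intervalIntegrable (by fun_prop) _ _)),
    integral_cos_pow_full, integral_cos_pow_full, Finset.prod_range_succ]
  have h2 : (2*(m:ℝ)+2) ≠ 0 := by positivity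
  field_simp
  ring

private lemma abs_cos_le_on (δ : ℝ) (hδ0 : 0 < δ) (hδπ : δ < π) (x : ℝ)
    (hx : x ∈ Set.uIcc (π/2) δ) : |Real.cos x| ≤ |Real.cos δ| := by
  rcases le_total δ (π/2) with h | h
  · rw [Set.uIcc_of_ge h] at hx
    have hx1 : δ ≤ x := hx.1
    have hx2 : x ≤ π/2 := hx.2
    have hcx : 0 ≤ Real.cos x :=
      Real.cos_nonneg_of_mem_Icc ⟨by linarith [Real.pi_pos], hx2⟩
    have hcδ : 0 ≤ Real.cos δ :=
      Real.cos_nonneg_of_mem_Icc ⟨by linarith [Real.pi_pos], h⟩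
    rw [abs_of_nonneg hcx, abs_of_nonneg hcδ]
    exact Real.cos_le_cos_of_nonneg_of_le_pi hδ0.le (by linarith [Real.pi_pos]) hx1
  · rw [Set.uIcc_of_le h] at hx
    have hx1 : π/2 ≤ x := hx.1
    have hx2 : x ≤ δ := hx.2
    have hcx : Real.cos x ≤ 0 :=
      Real.cos_nonpos_of_pi_div_two_le_of_le hx1 (by linarith)
    have hcδ : Real.cos δ ≤ 0 :=
      Real.cos_nonpos_of_pi_div_two_le_of_le h (by linarith)
    rw [abs_of_nonpos hcx, abs_of_nonpos hcδ]
    have := Real.cos_le_cos_of_nonneg_of_le_pi (by linarith [Real.pi_pos] : (0:ℝ) ≤ x)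
      hδπ.le hx2
    linarith

private lemma abs_cos_lt_one (δ : ℝ) (hδ0 : 0 < δ) (hδπ : δ < π) : |Real.cos δ| < 1 := by
  rw [abs_lt]
  constructor
  · have h := Real.cos_pi_sub δ
    have h1 : Real.cos (π - δ) ≤ 1 := Real.cos_le_one _
    have h2 : Real.cos (π - δ) ≠ 1 := by
      intro hc
      have := (Real.cos_eq_one_iff_of_lt_of_lt (by linarith [Real.pi_pos])
        (by linarith [Real.pi_pos])).mp hc
      linarith
    have := lt_of_le_of_ne h1 h2
    linarith [h ▸ this]
  · have h1 : Real.cos δ ≤ 1 := Real.cos_le_one _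
    have h2 : Real.cos δ ≠ 1 := by
      intro hc
      have := (Real.cos_eq_one_iff_of_lt_of_lt (by linarith [Real.pi_pos])
        (by linarith [Real.pi_pos])).mp hc
      linarith
    exact lt_of_le_of_ne h1 h2

private lemma tail_bound (δ : ℝ) (hδ0 : 0 < δ) (hδπ : δ < π) (n : ℕ) :
    |(∫ u in (-δ)..δ, Real.sin u ^2 * Real.cos u ^(2*n)) -
      ∫ u in (-(π/2))..(π/2), Real.sin u ^2 * Real.cos u ^(2*n)|
      ≤ 2 * π * |Real.cos δ| ^ (2*n) := by
  set h : ℝ → ℝ := fun u => Real.sin u ^2 * Real.cos u ^(2*n) with hh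
  have hint : ∀ p q : ℝ, IntervalIntegrable h MeasureTheory.volume p q :=
    fun p q => Continuous.intervalIntegrable (by fun_prop) _ _
  have hsplit : (∫ u in (-δ)..δ, h u)
      = (∫ u in (-δ)..(-(π/2)), h u) + (∫ u in (-(π/2))..(π/2), h u)
        + ∫ u in (π/2)..δ, h u := by
    rw [intervalIntegral.integral_add_adjacent_intervals (hint _ _) (hint _ _),
      intervalIntegral.integral_add_adjacent_intervals (hint _ _) (hint _ _)]
  have hsymm : (∫ u in (-δ)..(-(π/2)), h u) = ∫ u in (π/2)..δ, h u := by
    have : (∫ u in (π/2)..δ, h (-u)) = ∫ u in (-δ)..(-(π/2)), h u :=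
      intervalIntegral.integral_comp_neg h
    rw [← this]
    apply intervalIntegral.integral_congr
    intro x _
    simp [hh, Real.cos_neg, Real.sin_neg, neg_sq]
  have hb : ‖∫ u in (π/2)..δ, h u‖ ≤ |Real.cos δ|^(2*n) * |δ - π/2| := by
    apply intervalIntegral.norm_integral_le_of_norm_le_const
    intro x hx
    have hx' : x ∈ Set.uIcc (π/2) δ := Set.uIoc_subset_uIcc hx
    have h1 : |Real.cos x| ≤ |Real.cos δ| := abs_cos_le_on δ hδ0 hδπ x hx'
    have h2 : Real.sin x ^ 2 ≤ 1 := Real.sin_sq_le_one x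
    calc ‖h x‖ = Real.sin x ^2 * |Real.cos x|^(2*n) := by
          rw [hh]; simp [abs_mul, abs_pow, abs_of_nonneg (sq_nonneg (Real.sin x)), sq_abs]
      _ ≤ 1 * |Real.cos δ|^(2*n) := by
          apply mul_le_mul h2 (pow_le_pow_left₀ (abs_nonneg _) h1 _) (by positivity) one_pos.le
      _ = |Real.cos δ|^(2*n) := one_mul _
  have habs : |δ - π/2| ≤ π := by
    rw [abs_le]; constructor <;> [linarith [Real.pi_pos]; linarith [Real.pi_pos]]
  rw [hsplit, hsymm]
  have heq : (∫ u in (π/2)..δ, h u) + (∫ u in (-(π/2))..(π/2), h u) + (∫ u in (π/2)..δ, h u)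
      - (∫ u in (-(π/2))..(π/2), h u) = 2 * ∫ u in (π/2)..δ, h u := by ring
  rw [heq, abs_mul, abs_two]
  have hqn : (0:ℝ) ≤ |Real.cos δ|^(2*n) := by positivity
  calc 2 * |∫ u in (π/2)..δ, h u| ≤ 2 * (|Real.cos δ|^(2*n) * |δ - π/2|) := by
        have := hb
        rw [Real.norm_eq_abs] at this
        linarith
    _ ≤ 2 * (|Real.cos δ|^(2*n) * π) := by nlinarith
    _ = 2 * π * |Real.cos δ|^(2*n) := by ring

private lemma tendsto_main (δ : ℝ) (hδ0 : 0 < δ) (hδπ : δ < π) :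
    Tendsto (fun n : ℕ => (∫ u in (-δ)..δ, Real.sin u ^2 * Real.cos u ^(2*n))
        * (n:ℝ) ^ ((3:ℝ)/2)) atTop (𝓝 (Real.sqrt π / 2)) := by
  set P : ℕ → ℝ := fun n => ∏ i ∈ Finset.range n, (2*(i:ℝ)+1)/(2*i+2) with hP
  set M : ℕ → ℝ := fun n => π * P n / (2*n+2) with hMdef
  set I : ℕ → ℝ := fun n => ∫ u in (-δ)..δ, Real.sin u^2 * Real.cos u^(2*n) with hI
  have hM : ∀ n, (∫ u in (-(π/2))..(π/2), Real.sin u ^2 * Real.cos u ^(2*n)) = M n :=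
    fun n => integral_main n
  have hmain : Tendsto (fun n => M n * (n:ℝ)^((3:ℝ)/2)) atTop (𝓝 (Real.sqrt π/2)) := by
    have h1 : Tendsto (fun n : ℕ => (π/2) * ((P n * Real.sqrt n) * ((n:ℝ)/((n:ℝ)+1)))) atTop
        (𝓝 ((π/2) * ((Real.sqrt π/π) * 1))) :=
      tendsto_const_nhds.mul (tendsto_P_sqrt.mul (tendsto_natCast_div_add_atTop (1:ℝ)))
    have heq : (π/2) * ((Real.sqrt π/π) * 1) = Real.sqrt π/2 := by
      have := Real.pi_pos
      field_simp
    rw [heq] at h1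
    apply h1.congr'
    filter_upwards [eventually_ge_atTop 1] with n hn
    have hn0 : (0:ℝ) < n := by exact_mod_cast hn
    have hrpow : (n:ℝ)^((3:ℝ)/2) = n * Real.sqrt n := by
      rw [show (3:ℝ)/2 = 1 + 1/2 by norm_num, Real.rpow_add hn0, Real.rpow_one,
        ← Real.sqrt_eq_rpow]
    simp only [hMdef]
    rw [hrpow]
    field_simp
  have htail : Tendsto (fun n => (I n - M n) * (n:ℝ)^((3:ℝ)/2)) atTop (𝓝 0) := by
    set q := |Real.cos δ| with hq
    have hq0 : (0:ℝ) ≤ q := abs_nonneg _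
    have hq1 : q < 1 := abs_cos_lt_one δ hδ0 hδπ
    have hg : Tendsto (fun n : ℕ => (2*π) * ((n:ℝ)^(2:ℕ) * (q^2)^n)) atTop (𝓝 ((2*π) * 0)) :=
      tendsto_const_nhds.mul
        (tendsto_pow_const_mul_const_pow_of_lt_one 2 (by positivity) (by nlinarith))
    rw [mul_zero] at hg
    apply squeeze_zero_norm' _ hg
    filter_upwards [eventually_ge_atTop 1] with n hn
    have hn0 : (0:ℝ) < n := by exact_mod_cast hn
    have hn1 : (1:ℝ) ≤ n := by exact_mod_cast hn
    have hb := tail_bound δ hδ0 hδπ n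
    rw [hM n] at hb
    have hr2 : (n:ℝ)^((3:ℝ)/2) ≤ (n:ℝ)^(2:ℕ) := by
      calc (n:ℝ)^((3:ℝ)/2) ≤ (n:ℝ)^((2:ℕ):ℝ) :=
            Real.rpow_le_rpow_of_exponent_le hn1 (by norm_num)
        _ = (n:ℝ)^(2:ℕ) := Real.rpow_natCast _ 2
    have hq2n : q^(2*n) = (q^2)^n := by rw [pow_mul]
    have hrpos : (0:ℝ) ≤ (n:ℝ)^((3:ℝ)/2) := Real.rpow_nonneg hn0.le _
    rw [Real.norm_eq_abs, abs_mul, abs_of_nonneg hrpos]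
    calc |I n - M n| * (n:ℝ)^((3:ℝ)/2) ≤ (2*π*q^(2*n)) * (n:ℝ)^(2:ℕ) :=
          mul_le_mul hb hr2 hrpos (by positivity)
      _ = 2*π*((n:ℝ)^(2:ℕ) * (q^2)^n) := by rw [hq2n]; ring
  have hsum := hmain.add htail
  rw [add_zero] at hsum
  apply hsum.congr
  intro n
  simp only [hI]
  ring

/-- For `a > 0`, `f_a(θ) = (2 - 2cos(2√a θ))/(4a)`, `g_a(θ) = (1 + cos(2√a θ))/2`,
and `0 < ε < π/√a`, the sequence `r_n = ∫_{-ε}^{ε} f_a g_a^n` satisfies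
`r_n n^{3/2} → √π/(2 a^{3/2})`. -/
theorem example_asymptotics (a : ℝ) (ha : 0 < a) (ε : ℝ)
    (hε : 0 < ε) (hε' : ε < π / Real.sqrt a)
    (r : ℕ → ℝ)
    (hr : ∀ n : ℕ, r n = ∫ θ in (-ε)..ε,
      ((2 - 2 * Real.cos (2 * Real.sqrt a * θ)) / (4 * a)) *
        ((1 + Real.cos (2 * Real.sqrt a * θ)) / 2) ^ n) :
    Tendsto (fun n : ℕ => r n * (n : ℝ) ^ ((3 : ℝ) / 2)) atTop
      (nhds (Real.sqrt π / (2 * a ^ ((3 : ℝ) / 2)))) := by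
  have hsa : 0 < Real.sqrt a := Real.sqrt_pos.mpr ha
  have hδ0 : 0 < Real.sqrt a * ε := by positivity
  have hδπ : Real.sqrt a * ε < π := by
    have := (mul_lt_mul_iff_right₀ hsa).mpr hε'
    rwa [mul_div_cancel₀ _ hsa.ne'] at this
  have hr' : ∀ n : ℕ, r n = (a⁻¹ * (Real.sqrt a)⁻¹) *
      ∫ u in (-(Real.sqrt a * ε))..(Real.sqrt a * ε), Real.sin u^2 * Real.cos u^(2*n) := by
    intro n
    rw [hr n]
    have hcong : ∀ θ ∈ Set.uIcc (-ε) ε,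
        ((2 - 2 * Real.cos (2 * Real.sqrt a * θ)) / (4 * a)) *
          ((1 + Real.cos (2 * Real.sqrt a * θ)) / 2) ^ n
        = a⁻¹ * ((fun u => Real.sin u^2 * Real.cos u^(2*n)) (Real.sqrt a * θ)) := by
      intro θ _
      have h2 : 2 * Real.sqrt a * θ = 2 * (Real.sqrt a * θ) := by ring
      rw [h2, Real.cos_two_mul]
      set c := Real.cos (Real.sqrt a * θ) with hc
      have hs : Real.sin (Real.sqrt a * θ)^2 = 1 - c^2 := by
        have := Real.sin_sq_add_cos_sq (Real.sqrt a * θ); linarith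
      simp only []
      rw [hs, pow_mul]
      rw [show (1 + (2*c^2 - 1))/2 = c^2 by ring]
      rw [show (2 - 2*(2*c^2-1))/(4*a) = a⁻¹ * (1 - c^2) by
        field_simp; ring, ← hc]
      ring
    rw [intervalIntegral.integral_congr hcong, intervalIntegral.integral_const_mul,
      intervalIntegral.integral_comp_mul_left
        (fun u => Real.sin u^2 * Real.cos u^(2*n)) hsa.ne']
    rw [smul_eq_mul, show Real.sqrt a * -ε = -(Real.sqrt a * ε) by ring, mul_assoc]
  have hcomb := (tendsto_main (Real.sqrt a * ε) hδ0 hδπ).const_mul (a⁻¹ * (Real.sqrt a)⁻¹)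
  have hconst : (a⁻¹ * (Real.sqrt a)⁻¹) * (Real.sqrt π / 2)
      = Real.sqrt π / (2 * a ^ ((3:ℝ)/2)) := by
    have h32 : a ^ ((3:ℝ)/2) = a * Real.sqrt a := by
      rw [show (3:ℝ)/2 = 1 + 1/2 by norm_num, Real.rpow_add ha, Real.rpow_one,
        ← Real.sqrt_eq_rpow]
    rw [h32]
    field_simp
  rw [hconst] at hcomb
  apply hcomb.congr
  intro n
  rw [hr' n]
  ring
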